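/- Let F be the following set of 14 four-element subsets of {1,...,7}: {1,2,3,4}, {1,2,3,7}, {1,2,6,7}, {1,2,5,6}, {1,2,4,5}, {1,3,4,7}, {1,4,5,7}, {1,5,6,7}, {2,3,4,5}, {2,3,5,6}, {2,3,6,7}, {3,4,6,7}, {3,4,5,6}, {4,5,6,7} (the facets of the triangulation P^7_5 of the 3-sphere). Then the group of permutations σ of {1,...,7} such that σ maps every member of F to a member of F is isomorphic to the dihedral group of order 14. -/

import Mathlib

def P75 : Finset (Finset (Fin 7)) :=
  {({0, 1, 2, 3} : Finset (Fin 7)), {0, 1, 2, 6}, {0, 1, 5, 6},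
    {0, 1, 4, 5}, {0, 1, 3, 4}, {0, 2, 3, 6}, {0, 3, 4, 6}, {0, 4, 5, 6},
    {1, 2, 3, 4}, {1, 2, 4, 5}, {1, 2, 5, 6}, {2, 3, 5, 6}, {2, 3, 4, 5},
    {3, 4, 5, 6}}

def pairCount (a b : Fin 7) : ℕ := (P75.filter (fun s => a ∈ s ∧ b ∈ s)).card

def dihToPerm : DihedralGroup 7 →* Equiv.Perm (Fin 7) where
  toFun g := match g with
    | .r i => Equiv.subRight (i : Fin 7)
    | .sr i => Equiv.subLeft (i : Fin 7)
  map_one' := by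
    show Equiv.subRight (0 : Fin 7) = 1
    ext x; simp
  map_mul' a b := by
    rcases a with i | i <;> rcases b with j | j <;> ext x <;>
      simp [DihedralGroup.r_mul_r, DihedralGroup.r_mul_sr, DihedralGroup.sr_mul_r,
        DihedralGroup.sr_mul_sr, Equiv.Perm.mul_apply, sub_sub] <;> revert i j x <;> decide

lemma dih_inj : Function.Injective dihToPerm := by decide

set_option maxRecDepth 10000 in
set_option maxHeartbeats 1000000 in
lemma dih_mem (g : DihedralGroup 7) : ∀ s ∈ P75, s.image (dihToPerm g) ∈ P75 := by
  revert g; decide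

lemma pairCount_le (σ : Equiv.Perm (Fin 7)) (hσ : ∀ s ∈ P75, s.image σ ∈ P75)
    (a b : Fin 7) : pairCount a b ≤ pairCount (σ a) (σ b) := by
  classical
  apply Finset.card_le_card_of_injOn (fun s => s.image σ)
  · intro s hs
    simp only [Finset.mem_coe, Finset.mem_filter] at hs ⊢
    exact ⟨hσ s hs.1, Finset.mem_image_of_mem σ hs.2.1, Finset.mem_image_of_mem σ hs.2.2⟩
  · intro s _ t _ h
    exact Finset.image_injective σ.injective h

lemma pairCount_eq (σ : Equiv.Perm (Fin 7)) (hσ : ∀ s ∈ P75, s.image σ ∈ P75)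
    (hσ' : ∀ s ∈ P75, s.image ⇑σ⁻¹ ∈ P75) (a b : Fin 7) :
    pairCount (σ a) (σ b) = pairCount a b := by
  refine le_antisymm ?_ (pairCount_le σ hσ a b)
  have := pairCount_le σ⁻¹ hσ' (σ a) (σ b)
  simpa using this

lemma adj_iff : ∀ a b : Fin 7, pairCount a b = 5 → (b = a + 1 ∨ b = a - 1) := by decide

lemma adj_succ : ∀ a : Fin 7, pairCount a (a + 1) = 5 := by decide

open Fin.NatCast Fin.CommRing

/-- The facets of the triangulation `P⁷₅` of the 3-sphere on the seven
vertices `{1,…,7}` (here encoded as `Fin 7`, vertex `i` corresponding to `i−1`) are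
`1234, 1237, 1267, 1256, 1245, 1347, 1457, 1567, 2345, 2356, 2367, 3467, 3456, 4567`. The
group of permutations of the vertices mapping every facet to a facet is isomorphic to the
dihedral group of order 14. -/
theorem automorphism_group_P75 (F : Finset (Finset (Fin 7)))
    (hF : F = {({0, 1, 2, 3} : Finset (Fin 7)), {0, 1, 2, 6}, {0, 1, 5, 6},
      {0, 1, 4, 5}, {0, 1, 3, 4}, {0, 2, 3, 6}, {0, 3, 4, 6}, {0, 4, 5, 6},
      {1, 2, 3, 4}, {1, 2, 4, 5}, {1, 2, 5, 6}, {2, 3, 5, 6}, {2, 3, 4, 5},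
      {3, 4, 5, 6}})
    (H : Subgroup (Equiv.Perm (Fin 7)))
    (hH : ∀ σ : Equiv.Perm (Fin 7), σ ∈ H ↔ ∀ s ∈ F, s.image σ ∈ F) :
    Nonempty (H ≃* DihedralGroup 7) := by
  have hF' : F = P75 := hF
  subst hF'
  have hrange : H = dihToPerm.range := by
    ext σ
    constructor
    · intro hσmem
      have hσ : ∀ s ∈ P75, s.image σ ∈ P75 := (hH σ).mp hσmem
      have hσ' : ∀ s ∈ P75, s.image ⇑σ⁻¹ ∈ P75 := (hH σ⁻¹).mp (H.inv_mem hσmem)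
      have hloc : ∀ x : Fin 7, σ (x + 1) = σ x + 1 ∨ σ (x + 1) = σ x - 1 := by
        intro x
        exact adj_iff _ _ (by rw [pairCount_eq σ hσ hσ']; exact adj_succ x)
      rcases hloc 0 with h0 | h0
      · -- rotation case
        have hstepN : ∀ n : ℕ, σ ((n : Fin 7) + 1) = σ (n : Fin 7) + 1 := by
          intro n
          induction n with
          | zero => simpa using h0
          | succ n ih =>
            have hcast : ((n + 1 : ℕ) : Fin 7) = (n : Fin 7) + 1 := by push_cast; ring
            rw [hcast]
            rcases hloc ((n : Fin 7) + 1) with h | h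
            · exact h
            · exfalso
              rw [ih, add_sub_cancel_right] at h
              have he := σ.injective h
              have : (2 : Fin 7) = 0 := by linear_combination he
              exact absurd this (by decide)
        have hstep : ∀ x : Fin 7, σ (x + 1) = σ x + 1 := by
          intro x
          have := hstepN x.val
          rwa [Fin.cast_val_eq_self] at this
        have hall : ∀ x : Fin 7, σ x = x + σ 0 := by
          have hlin : ∀ n : ℕ, σ (n : Fin 7) = (n : Fin 7) + σ 0 := by
            intro n
            induction n with
            | zero => simp
            | succ n ih =>
              have hcast : ((n + 1 : ℕ) : Fin 7) = (n : Fin 7) + 1 := by push_cast; ring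
              rw [hcast, hstep, ih]; ring
          intro x
          have := hlin x.val
          rwa [Fin.cast_val_eq_self] at this
        refine ⟨.r (-(σ 0)), Equiv.ext fun x => ?_⟩
        show x - (-(σ 0)) = σ x
        rw [hall x, sub_neg_eq_add]
      · -- reflection case
        have hstepN : ∀ n : ℕ, σ ((n : Fin 7) + 1) = σ (n : Fin 7) - 1 := by
          intro n
          induction n with
          | zero => simpa using h0
          | succ n ih =>
            have hcast : ((n + 1 : ℕ) : Fin 7) = (n : Fin 7) + 1 := by push_cast; ring
            rw [hcast]
            rcases hloc ((n : Fin 7) + 1) with h | h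
            · exfalso
              rw [ih, sub_add_cancel] at h
              have he := σ.injective h
              have : (2 : Fin 7) = 0 := by linear_combination he
              exact absurd this (by decide)
            · exact h
        have hstep : ∀ x : Fin 7, σ (x + 1) = σ x - 1 := by
          intro x
          have := hstepN x.val
          rwa [Fin.cast_val_eq_self] at this
        have hall : ∀ x : Fin 7, σ x = σ 0 - x := by
          have hlin : ∀ n : ℕ, σ (n : Fin 7) = σ 0 - (n : Fin 7) := by
            intro n
            induction n with
            | zero => simp
            | succ n ih =>
              have hcast : ((n + 1 : ℕ) : Fin 7) = (n : Fin 7) + 1 := by push_cast; ring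
              rw [hcast, hstep, ih]; ring
          intro x
          have := hlin x.val
          rwa [Fin.cast_val_eq_self] at this
        refine ⟨.sr (σ 0), Equiv.ext fun x => ?_⟩
        show σ 0 - x = σ x
        rw [hall x]
    · rintro ⟨g, rfl⟩
      exact (hH _).mpr (dih_mem g)
  exact ⟨(MulEquiv.subgroupCongr hrange).trans (MonoidHom.ofInjective dih_inj).symm⟩
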